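/- Under the hypotheses of the exponential decay theorem for the exact hypergraph SIS process with concave infection function f, if β f(1) λ(W)/δ < 1 then the expected extinction time τ satisfies 𝔼[τ] ≤ (1 + log n) / (δ − β f(1) λ(W)). -/

import Mathlib

open Finset Matrix

lemma concave_lin (f : ℕ → ℝ)
    (hconc : ∀ k : ℕ, 1 ≤ k → f (k + 1) - f k ≤ f k - f (k - 1)) (hf0 : f 0 = 0) :
    ∀ k, f k ≤ k * f 1 := by
  have hd : ∀ k, f (k + 1) - f k ≤ f 1 := by
    intro k
    induction k with
    | zero => simp [hf0]
    | succ k ih =>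
      have h := hconc (k + 1) (by omega)
      simp only [Nat.add_sub_cancel] at h
      linarith
  intro k
  induction k with
  | zero => simp [hf0]
  | succ k ih =>
    have := hd k
    push_cast
    nlinarith

lemma rayleigh_bound {n : ℕ} (hne : (Finset.univ : Finset (Fin n)).Nonempty)
    (W : Matrix (Fin n) (Fin n) ℝ) (hW : W.IsHermitian) (x : Fin n → ℝ) :
    x ⬝ᵥ (W *ᵥ x) ≤ (Finset.univ.sup' hne hW.eigenvalues) * (x ⬝ᵥ x) := by
  set U : Matrix (Fin n) (Fin n) ℝ := (hW.eigenvectorUnitary : Matrix (Fin n) (Fin n) ℝ) with hU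
  set y : Fin n → ℝ := star U *ᵥ x with hy
  have hUU : U * star U = 1 := (Matrix.mem_unitaryGroup_iff).mp hW.eigenvectorUnitary.2
  have hsU : star U = U.transpose := by
    rw [Matrix.star_eq_conjTranspose, Matrix.conjTranspose_eq_transpose_of_trivial]
  have hUUt : U * U.transpose = 1 := by rw [← hsU]; exact hUU
  have hxy : x ᵥ* U = y := by rw [hy, hsU, Matrix.mulVec_transpose]
  have hyy : y ⬝ᵥ y = x ⬝ᵥ x := by
    rw [hy, hsU, Matrix.mulVec_transpose]
    nth_rewrite 2 [← Matrix.mulVec_transpose]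
    rw [Matrix.dotProduct_mulVec, Matrix.vecMul_vecMul, hUUt, Matrix.vecMul_one]
  have hq : x ⬝ᵥ (W *ᵥ x) = ∑ i, hW.eigenvalues i * (y i) ^ 2 := by
    conv_lhs => rw [hW.spectral_theorem, Unitary.conjStarAlgAut_apply]
    rw [← Matrix.mulVec_mulVec, ← Matrix.mulVec_mulVec, Matrix.dotProduct_mulVec, hxy, ← hy]
    simp [dotProduct, Matrix.mulVec_diagonal]
    exact Finset.sum_congr rfl fun i _ => by ring
  have hyy2 : (y ⬝ᵥ y) = ∑ i, (y i) ^ 2 := by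
    simp [dotProduct]
    exact Finset.sum_congr rfl fun i _ => by ring
  rw [hq, ← hyy, hyy2, Finset.mul_sum]
  exact Finset.sum_le_sum fun i _ =>
    mul_le_mul_of_nonneg_right (Finset.le_sup' _ (Finset.mem_univ i)) (sq_nonneg _)

set_option maxHeartbeats 2000000


open MeasureTheory ProbabilityTheory Filter Finset

/-- The hypergraph SIS infection rate `λ_i(x) = β ∑_h I_{ih} f(∑_j I_{jh} x_j)`. -/
noncomputable def infRate (n m : ℕ) (Inc : Fin n → Fin m → ℕ) (β : ℝ) (f : ℕ → ℝ)
    (x : Fin n → ℕ) (i : Fin n) : ℝ :=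
  β * ∑ h : Fin m, (Inc i h : ℝ) * f (∑ j, Inc j h * x j)

/-- Expected extinction time bound for the exact stochastic hypergraph SIS process with
concave infection function: if `β f(1) λ(W)/δ < 1` then
`𝔼[τ] ≤ (1 + log n)/(δ − β f(1) λ(W))`, where `τ` is the extinction time. -/
theorem exact_process_extinction_time
    (n m : ℕ) (hn : 0 < n) (Inc : Fin n → Fin m → ℕ)
    (hInc : ∀ i h, Inc i h = 0 ∨ Inc i h = 1)
    (β δ : ℝ) (hβ : 0 < β) (hδ : 0 < δ)
    (f : ℕ → ℝ)
    (hconc : ∀ k : ℕ, 1 ≤ k → f (k + 1) - f k ≤ f k - f (k - 1))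
    (hf0 : f 0 = 0) (hnonneg : ∀ k, 0 ≤ f k)
    (W : Matrix (Fin n) (Fin n) ℝ)
    (hWdef : ∀ i j, W i j = ((∑ h, Inc i h * Inc j h : ℕ) : ℝ))
    (hW : W.IsHermitian)
    (lamW : ℝ)
    (hlam : lamW = Finset.univ.sup'
      (by simpa using Finset.univ_nonempty_iff.mpr (Fin.pos_iff_nonempty.mp hn))
      hW.eigenvalues)
    (hspec : β * f 1 * lamW / δ < 1)
    (Ω : Type*) [MeasurableSpace Ω] (μ : Measure Ω) [IsProbabilityMeasure μ]
    (X : ℝ → Ω → Fin n → ℕ)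
    (hmeas : ∀ t, Measurable (X t))
    (hval : ∀ t ω i, X t ω i = 0 ∨ X t ω i = 1)
    (i₀ : ℝ) (hi₀ : i₀ ∈ Set.Icc (0 : ℝ) 1)
    (hinit : ∀ i, μ {ω | X 0 ω i = 1} = ENNReal.ofReal i₀)
    (hindep : iIndepFun (fun i ω => X 0 ω i) μ)
    (hdyn : ∀ i : Fin n, ∀ t : ℝ, 0 ≤ t →
      HasDerivAt (fun s => ∫ ω, ((X s ω i : ℝ)) ∂μ)
        (∫ ω, ((1 - (X t ω i : ℝ)) * infRate n m Inc β f (X t ω) i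
            - δ * (X t ω i : ℝ)) ∂μ) t)
    (τ : Ω → ℝ)
    (hτ : ∀ ω, τ ω = sInf {t : ℝ | 0 ≤ t ∧ ∑ i, X t ω i = 0}) :
    ∫ ω, τ ω ∂μ ≤ (1 + Real.log n) / (δ - β * f 1 * lamW) := by

  -- basic positivity
  have hr : 0 < δ - β * f 1 * lamW := by
    have := (div_lt_one hδ).mp hspec; linarith
  set r : ℝ := δ - β * f 1 * lamW with hrdef
  set K : ℝ := β * f 1 * lamW - δ with hKdef
  have hKr : K = -r := by rw [hKdef, hrdef]; ring
  have hf1 : 0 ≤ f 1 := hnonneg 1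
  have hβf1 : 0 ≤ β * f 1 := mul_nonneg hβ.le hf1
  have hn1 : (1:ℝ) ≤ n := by exact_mod_cast hn
  have hlogn : 0 ≤ Real.log n := Real.log_nonneg hn1
  -- τ is nonnegative
  have hτ0 : ∀ ω, 0 ≤ τ ω := by
    intro ω; rw [hτ]
    exact Real.sInf_nonneg fun x hx => hx.1
  -- measurability and integrability of the indicators
  have hXm : ∀ (t : ℝ) (i : Fin n), Measurable fun ω => ((X t ω i : ℝ)) :=
    fun t i => (measurable_from_top).comp ((measurable_pi_apply i).comp (hmeas t))
  have hX01 : ∀ (t : ℝ) (ω : Ω) (i : Fin n), 0 ≤ ((X t ω i : ℝ)) ∧ ((X t ω i : ℝ)) ≤ 1 := by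
    intro t ω i; rcases hval t ω i with h | h <;> simp [h]
  have hint : ∀ (t : ℝ) (i : Fin n), Integrable (fun ω => ((X t ω i : ℝ))) μ := by
    intro t i
    refine (integrable_const (1:ℝ)).mono' ((hXm t i).aestronglyMeasurable) ?_
    filter_upwards with ω
    rw [Real.norm_eq_abs, abs_of_nonneg (hX01 t ω i).1]
    exact (hX01 t ω i).2
  set p : Fin n → ℝ → ℝ := fun i t => ∫ ω, ((X t ω i : ℝ)) ∂μ with hpdef
  have hp0 : ∀ i t, 0 ≤ p i t := fun i t => integral_nonneg fun ω => (hX01 t ω i).1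
  have hp1 : ∀ i t, p i t ≤ 1 := by
    intro i t
    calc p i t ≤ ∫ _, (1:ℝ) ∂μ :=
          integral_mono (hint t i) (integrable_const 1) fun ω => (hX01 t ω i).2
      _ = 1 := by simp
  -- pointwise bound on the drift
  have hflin := concave_lin f hconc hf0
  have hpt : ∀ (x : Fin n → ℕ), (∀ j, x j = 0 ∨ x j = 1) → ∀ i : Fin n,
      (1 - (x i : ℝ)) * infRate n m Inc β f x i - δ * (x i : ℝ)
        ≤ β * f 1 * (∑ j, W i j * (x j : ℝ)) - δ * (x i : ℝ) := by
    intro x hx i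
    have hIR0 : 0 ≤ infRate n m Inc β f x i := by
      unfold infRate
      exact mul_nonneg hβ.le (Finset.sum_nonneg fun h _ =>
        mul_nonneg (by positivity) (hnonneg _))
    have h1 : (1 - (x i : ℝ)) * infRate n m Inc β f x i ≤ infRate n m Inc β f x i := by
      rcases hx i with h | h
      · simp [h]
      · simpa [h] using hIR0
    have h2 : infRate n m Inc β f x i ≤ β * f 1 * (∑ j, W i j * (x j : ℝ)) := by
      unfold infRate
      have hterm : ∀ h : Fin m, (Inc i h : ℝ) * f (∑ j, Inc j h * x j)
          ≤ f 1 * ∑ j, (Inc i h : ℝ) * ((Inc j h : ℝ) * (x j : ℝ)) := by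
        intro h
        calc (Inc i h : ℝ) * f (∑ j, Inc j h * x j)
            ≤ (Inc i h : ℝ) * (((∑ j, Inc j h * x j : ℕ) : ℝ) * f 1) :=
              mul_le_mul_of_nonneg_left (hflin _) (by positivity)
          _ = f 1 * ∑ j, (Inc i h : ℝ) * ((Inc j h : ℝ) * (x j : ℝ)) := by
              push_cast
              simp only [Finset.mul_sum, Finset.sum_mul]
              exact Finset.sum_congr rfl fun j _ => by ring
      calc β * ∑ h, (Inc i h : ℝ) * f (∑ j, Inc j h * x j)
          ≤ β * ∑ h, f 1 * ∑ j, (Inc i h : ℝ) * ((Inc j h : ℝ) * (x j : ℝ)) :=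
            mul_le_mul_of_nonneg_left (Finset.sum_le_sum fun h _ => hterm h) hβ.le
        _ = β * f 1 * (∑ j, W i j * (x j : ℝ)) := by
            simp only [hWdef]
            push_cast
            simp only [Finset.mul_sum, Finset.sum_mul]
            rw [Finset.sum_comm]
            exact Finset.sum_congr rfl fun j _ =>
              Finset.sum_congr rfl fun h _ => by ring
    exact sub_le_sub_right (h1.trans h2) _
  -- measurability and integrability of the drift integrand
  have hdriftm : ∀ (t : ℝ) (i : Fin n), Measurable (fun ω =>
      (1 - (X t ω i : ℝ)) * infRate n m Inc β f (X t ω) i - δ * (X t ω i : ℝ)) := by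
    intro t i
    exact (measurable_of_countable (fun x : Fin n → ℕ =>
      (1 - (x i : ℝ)) * infRate n m Inc β f x i - δ * (x i : ℝ))).comp (hmeas t)
  have hSle : ∀ (t : ℝ) (ω : Ω) (h : Fin m), (∑ j, Inc j h * X t ω j) ≤ n := by
    intro t ω h
    calc (∑ j, Inc j h * X t ω j) ≤ ∑ _j : Fin n, (1:ℕ) := Finset.sum_le_sum fun j _ => by
          rcases hInc j h with h1 | h1 <;> rcases hval t ω j with h2 | h2 <;> simp [h1, h2]
      _ = n := by simp
  have hfmono : ∀ k : ℕ, k ≤ n → f k ≤ n * f 1 := by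
    intro k hk
    calc f k ≤ k * f 1 := hflin k
      _ ≤ n * f 1 := by
          have : (k : ℝ) ≤ n := by exact_mod_cast hk
          nlinarith
  have hIRb : ∀ (t : ℝ) (ω : Ω) (i : Fin n),
      infRate n m Inc β f (X t ω) i ≤ β * (m * (n * f 1)) := by
    intro t ω i
    unfold infRate
    refine mul_le_mul_of_nonneg_left ?_ hβ.le
    calc ∑ h, (Inc i h : ℝ) * f (∑ j, Inc j h * X t ω j)
        ≤ ∑ _h : Fin m, (n : ℝ) * f 1 := Finset.sum_le_sum fun h _ => by
          have hI : (Inc i h : ℝ) ≤ 1 := by rcases hInc i h with h1 | h1 <;> simp [h1]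
          have := hfmono _ (hSle t ω h)
          nlinarith [hnonneg (∑ j, Inc j h * X t ω j), Nat.cast_nonneg (α := ℝ) (Inc i h)]
      _ = m * (n * f 1) := by simp [mul_assoc]
  have hIR0' : ∀ (t : ℝ) (ω : Ω) (i : Fin n), 0 ≤ infRate n m Inc β f (X t ω) i := by
    intro t ω i
    unfold infRate
    exact mul_nonneg hβ.le (Finset.sum_nonneg fun h _ =>
      mul_nonneg (by positivity) (hnonneg _))
  have hdrift_int : ∀ (t : ℝ) (i : Fin n), Integrable (fun ω =>
      (1 - (X t ω i : ℝ)) * infRate n m Inc β f (X t ω) i - δ * (X t ω i : ℝ)) μ := by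
    intro t i
    refine (integrable_const (β * (m * (n * f 1)) + δ)).mono'
      ((hdriftm t i).aestronglyMeasurable) ?_
    filter_upwards with ω
    rw [Real.norm_eq_abs, abs_le]
    have h01 := hX01 t ω i
    have hb := hIRb t ω i
    have h0 := hIR0' t ω i
    constructor <;> nlinarith [mul_nonneg (sub_nonneg.mpr h01.2) h0]
  -- integrated drift bound
  have hqle : ∀ (i : Fin n) (t : ℝ),
      (∫ ω, ((1 - (X t ω i : ℝ)) * infRate n m Inc β f (X t ω) i - δ * (X t ω i : ℝ)) ∂μ)
        ≤ β * f 1 * (∑ j, W i j * p j t) - δ * p i t := by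
    intro i t
    have hRint : Integrable (fun ω =>
        β * f 1 * (∑ j, W i j * (X t ω j : ℝ)) - δ * (X t ω i : ℝ)) μ := by
      exact ((integrable_finset_sum _ fun j _ =>
        (hint t j).const_mul (W i j)).const_mul (β * f 1)).sub ((hint t i).const_mul δ)
    calc (∫ ω, ((1 - (X t ω i : ℝ)) * infRate n m Inc β f (X t ω) i - δ * (X t ω i : ℝ)) ∂μ)
        ≤ ∫ ω, (β * f 1 * (∑ j, W i j * (X t ω j : ℝ)) - δ * (X t ω i : ℝ)) ∂μ :=
          integral_mono (hdrift_int t i) hRint fun ω => hpt (X t ω) (fun j => hval t ω j) i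
      _ = β * f 1 * (∑ j, W i j * p j t) - δ * p i t := by
          rw [integral_sub (((integrable_finset_sum _ fun j _ =>
              (hint t j).const_mul (W i j)).const_mul (β * f 1))) ((hint t i).const_mul δ),
            integral_const_mul, integral_const_mul,
            integral_finset_sum _ fun j _ => (hint t j).const_mul (W i j)]
          simp only [integral_const_mul]
          rfl
  -- the squared-norm Lyapunov function
  set q : Fin n → ℝ → ℝ := fun i t => ∫ ω,
    ((1 - (X t ω i : ℝ)) * infRate n m Inc β f (X t ω) i - δ * (X t ω i : ℝ)) ∂μ with hqdef
  set g : ℝ → ℝ := fun t => ∑ i, (p i t) ^ 2 with hgdef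
  have hne : (Finset.univ : Finset (Fin n)).Nonempty := ⟨⟨0, hn⟩, Finset.mem_univ _⟩
  have hgd : ∀ t : ℝ, 0 ≤ t → HasDerivAt g (∑ i, 2 * p i t * q i t) t := by
    intro t ht
    have h : ∀ i ∈ Finset.univ, HasDerivAt (fun s => (p i s) ^ 2) (2 * p i t * q i t) t := by
      intro i _
      have h2 := (hdyn i t ht).pow 2
      simpa [Pi.pow_def] using h2
    simpa using HasDerivAt.fun_sum h
  have hSq : ∀ t : ℝ, (∑ i, 2 * p i t * q i t) ≤ 2 * K * g t := by
    intro t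
    have h1 : (∑ i, 2 * p i t * q i t)
        ≤ ∑ i, 2 * p i t * (β * f 1 * (∑ j, W i j * p j t) - δ * p i t) :=
      Finset.sum_le_sum fun i _ => mul_le_mul_of_nonneg_left (hqle i t)
        (mul_nonneg (by norm_num) (hp0 i t))
    have hray := rayleigh_bound hne W hW (fun i => p i t)
    have hdot : (fun i => p i t) ⬝ᵥ (W *ᵥ fun i => p i t)
        = ∑ i, p i t * (∑ j, W i j * p j t) := by
      simp [dotProduct, Matrix.mulVec]
    have hdot2 : (fun i => p i t) ⬝ᵥ (fun i => p i t) = ∑ i, (p i t) ^ 2 := by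
      simp [dotProduct, sq]
    have h2 : ∑ i, p i t * (∑ j, W i j * p j t) ≤ lamW * ∑ i, (p i t) ^ 2 := by
      rw [hlam, ← hdot, ← hdot2]; exact hray
    calc (∑ i, 2 * p i t * q i t)
        ≤ ∑ i, 2 * p i t * (β * f 1 * (∑ j, W i j * p j t) - δ * p i t) := h1
      _ = 2 * (β * f 1) * (∑ i, p i t * (∑ j, W i j * p j t)) - 2 * δ * ∑ i, (p i t) ^ 2 := by
          rw [Finset.mul_sum, Finset.mul_sum, ← Finset.sum_sub_distrib]
          exact Finset.sum_congr rfl fun i _ => by ring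
      _ ≤ 2 * (β * f 1) * (lamW * ∑ i, (p i t) ^ 2) - 2 * δ * ∑ i, (p i t) ^ 2 :=
          sub_le_sub_right (mul_le_mul_of_nonneg_left h2 (by positivity)) _
      _ = 2 * K * g t := by rw [hKdef, hgdef]; ring
  have hgederiv : ∀ t : ℝ, 0 ≤ t → HasDerivAt (fun s => g s * Real.exp (-(2*K) * s))
      ((∑ i, 2 * p i t * q i t) * Real.exp (-(2*K)*t)
        + g t * (Real.exp (-(2*K)*t) * -(2*K))) t := by
    intro t ht
    have he : HasDerivAt (fun s : ℝ => Real.exp (-(2*K) * s))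
        (Real.exp (-(2*K)*t) * -(2*K)) t := by
      simpa using (((hasDerivAt_id t).const_mul (-(2*K))).exp)
    exact (hgd t ht).mul he
  set F : ℝ → ℝ := fun s => g s * Real.exp (-(2*K)*s) with hFdef
  have hFanti : AntitoneOn F (Set.Ici 0) := by
    apply antitoneOn_of_deriv_nonpos (convex_Ici 0)
    · intro t ht; exact (hgederiv t ht).continuousAt.continuousWithinAt
    · rw [interior_Ici]; intro t ht
      exact (hgederiv t ht.le).differentiableAt.differentiableWithinAt
    · rw [interior_Ici]; intro t ht
      rw [(hgederiv t ht.le).deriv]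
      have hb := hSq t
      have hepos := Real.exp_pos (-(2*K)*t)
      nlinarith [hb, hepos]
  have hgbound : ∀ t : ℝ, 0 ≤ t → g t ≤ n * Real.exp (2*K*t) := by
    intro t ht
    have hg0 : g 0 ≤ n := by
      calc g 0 ≤ ∑ _i : Fin n, (1:ℝ) :=
            Finset.sum_le_sum fun i _ => by nlinarith [hp0 i 0, hp1 i 0]
        _ = n := by simp
    have h1 : g t * Real.exp (-(2*K)*t) ≤ n := by
      calc g t * Real.exp (-(2*K)*t) = F t := rfl
        _ ≤ F 0 := hFanti Set.self_mem_Ici ht ht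
        _ = g 0 := by simp [hFdef]
        _ ≤ n := hg0
    have h2 := mul_le_mul_of_nonneg_right h1 (Real.exp_pos (2*K*t)).le
    calc g t = g t * Real.exp (-(2*K)*t) * Real.exp (2*K*t) := by
          rw [mul_assoc, ← Real.exp_add, show -(2*K)*t + 2*K*t = 0 by ring,
            Real.exp_zero, mul_one]
      _ ≤ n * Real.exp (2*K*t) := h2
  have hsum_bound : ∀ t : ℝ, 0 ≤ t → (∑ i, p i t) ≤ n * Real.exp (K*t) := by
    intro t ht
    have hcs : (∑ i, p i t) ^ 2 ≤ n * g t := by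
      have h := sq_sum_le_card_mul_sum_sq (s := Finset.univ) (f := fun i => p i t)
      simpa [hgdef] using h
    have hgle := hgbound t ht
    have hexp : Real.exp (2*K*t) = Real.exp (K*t) * Real.exp (K*t) := by
      rw [← Real.exp_add]; ring_nf
    have hS0 : 0 ≤ ∑ i, p i t := Finset.sum_nonneg fun i _ => hp0 i t
    have hb0 : (0:ℝ) ≤ n * Real.exp (K*t) := by positivity
    have h1 : (∑ i, p i t) ^ 2 ≤ (n * Real.exp (K*t)) ^ 2 := by
      calc (∑ i, p i t) ^ 2 ≤ n * g t := hcs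
        _ ≤ n * (n * Real.exp (2*K*t)) :=
            mul_le_mul_of_nonneg_left hgle (by positivity)
        _ = (n * Real.exp (K*t)) ^ 2 := by rw [hexp]; ring
    have h2 := Real.sqrt_le_sqrt h1
    rwa [Real.sqrt_sq hS0, Real.sqrt_sq hb0] at h2
  -- tail bound
  have htail : ∀ t : ℝ, 0 < t →
      (μ {a | t < τ a}).toReal ≤ min 1 ((n:ℝ) * Real.exp (K * t)) := by
    intro t ht
    have hle1 : (μ {a | t < τ a}).toReal ≤ 1 := by
      have h1 := measure_mono (μ := μ) (Set.subset_univ {a | t < τ a})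
      have h2 := ENNReal.toReal_mono (measure_ne_top μ _) h1
      simpa using h2
    have hsub : {a | t < τ a} ⊆ {ω | 1 ≤ ∑ i, ((X t ω i : ℝ))} := by
      intro ω hω
      by_contra hcon
      have hcon' : ∑ i, ((X t ω i : ℝ)) < 1 := not_le.mp hcon
      have hzero : (∑ i, X t ω i) = 0 := by
        by_contra hz
        have h1 : 1 ≤ ∑ i, X t ω i := Nat.one_le_iff_ne_zero.mpr hz
        have h2 : (1:ℝ) ≤ ∑ i, ((X t ω i : ℝ)) := by exact_mod_cast h1
        linarith
      have hmem : t ∈ {s : ℝ | 0 ≤ s ∧ ∑ i, X s ω i = 0} := ⟨ht.le, hzero⟩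
      have hbdd : BddBelow {s : ℝ | 0 ≤ s ∧ ∑ i, X s ω i = 0} := ⟨0, fun s hs => hs.1⟩
      have hle : τ ω ≤ t := by rw [hτ]; exact csInf_le hbdd hmem
      exact absurd hω (not_lt.mpr hle)
    have hSint : Integrable (fun ω => ∑ i, ((X t ω i : ℝ))) μ :=
      integrable_finset_sum _ fun i _ => hint t i
    have hmarkov := mul_meas_ge_le_integral_of_nonneg
      (ae_of_all μ fun ω => Finset.sum_nonneg fun i _ => (hX01 t ω i).1) hSint 1
    have hint_sum : (∫ ω, ∑ i, ((X t ω i : ℝ)) ∂μ) = ∑ i, p i t :=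
      integral_finset_sum _ fun i _ => hint t i
    have hmono := ENNReal.toReal_mono (measure_ne_top μ _) (measure_mono hsub)
    refine le_min hle1 ?_
    calc (μ {a | t < τ a}).toReal ≤ (μ {ω | 1 ≤ ∑ i, ((X t ω i : ℝ))}).toReal := hmono
      _ ≤ ∑ i, p i t := by rw [← hint_sum]; rw [measureReal_def] at hmarkov; linarith [hmarkov]
      _ ≤ n * Real.exp (K*t) := hsum_bound t ht.le
  -- conclude
  by_cases hτint : Integrable τ μ
  · rw [hτint.integral_eq_integral_meas_lt (ae_of_all μ hτ0)]
    set φ : ℝ → ℝ := fun t => min 1 ((n:ℝ) * Real.exp (K * t)) with hφdef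
    have hexpint : IntegrableOn (fun t => (n:ℝ) * Real.exp (K * t)) (Set.Ioi 0) := by
      have h := (exp_neg_integrableOn_Ioi 0 hr).const_mul (n:ℝ)
      simpa [hKr, neg_mul, IntegrableOn] using h
    have hφcont : Continuous φ := by
      apply continuous_const.min
      exact continuous_const.mul (Real.continuous_exp.comp (continuous_const.mul continuous_id))
    have hφnn : ∀ t : ℝ, 0 ≤ φ t := fun t => le_min zero_le_one (by positivity)
    have hφint : IntegrableOn φ (Set.Ioi 0) := by
      refine hexpint.mono' hφcont.aestronglyMeasurable ?_
      refine ae_of_all _ fun t => ?_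
      rw [Real.norm_eq_abs, abs_of_nonneg (hφnn t)]
      exact min_le_right _ _
    have hmono2 : (∫ t in Set.Ioi 0, (μ {a | t < τ a}).toReal) ≤ ∫ t in Set.Ioi 0, φ t := by
      refine integral_mono_of_nonneg (ae_of_all _ fun t => ENNReal.toReal_nonneg) hφint ?_
      refine (ae_restrict_iff' measurableSet_Ioi).mpr (ae_of_all _ fun t ht => htail t ht)
    set t₀ : ℝ := Real.log n / r with ht₀def
    have ht₀ : 0 ≤ t₀ := div_nonneg hlogn hr.le
    have hIoi : Set.Ioi (0:ℝ) = Set.Ioc 0 t₀ ∪ Set.Ioi t₀ := (Set.Ioc_union_Ioi_eq_Ioi ht₀).symm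
    have hdisj : Disjoint (Set.Ioc (0:ℝ) t₀) (Set.Ioi t₀) := Set.Ioc_disjoint_Ioi le_rfl
    have hint1 : IntegrableOn φ (Set.Ioc 0 t₀) :=
      hφint.mono_set (by rw [hIoi]; exact Set.subset_union_left)
    have hint2 : IntegrableOn φ (Set.Ioi t₀) :=
      hφint.mono_set (by rw [hIoi]; exact Set.subset_union_right)
    have hsplit : (∫ t in Set.Ioi 0, φ t)
        = (∫ t in Set.Ioc 0 t₀, φ t) + ∫ t in Set.Ioi t₀, φ t := by
      rw [hIoi, setIntegral_union hdisj measurableSet_Ioi hint1 hint2]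
    have hb1 : (∫ t in Set.Ioc 0 t₀, φ t) ≤ t₀ := by
      calc (∫ t in Set.Ioc 0 t₀, φ t) ≤ ∫ _t in Set.Ioc 0 t₀, (1:ℝ) :=
            setIntegral_mono_on hint1 ((integrableOn_const_iff (C := (1:ℝ))).mpr (Or.inr measure_Ioc_lt_top))
              measurableSet_Ioc (fun t _ => min_le_left _ _)
        _ = t₀ := by simp [Real.volume_Ioc, ht₀]
    have hKneg : K < 0 := by rw [hKr]; linarith
    have hexpderiv : ∀ x ∈ Set.Ici t₀,
        HasDerivAt (fun t => (n:ℝ) / K * Real.exp (K * t)) ((n:ℝ) * Real.exp (K * x)) x := by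
      intro x _
      have h := (((hasDerivAt_id x).const_mul K).exp).const_mul ((n:ℝ) / K)
      have hKne : K ≠ 0 := hKneg.ne
      refine h.congr_deriv ?_
      field_simp
      simp
    have htend : Tendsto (fun t => (n:ℝ) / K * Real.exp (K * t)) atTop (nhds 0) := by
      have h1 : Tendsto (fun t : ℝ => K * t) atTop atBot :=
        (tendsto_const_mul_atBot_of_neg hKneg).mpr tendsto_id
      have h2 : Tendsto (fun t : ℝ => Real.exp (K * t)) atTop (nhds 0) :=
        Real.tendsto_exp_atBot.comp h1
      have h3 : Tendsto (fun t : ℝ => (n:ℝ) / K * Real.exp (K * t)) atTop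
          (nhds ((n:ℝ) / K * 0)) := h2.const_mul _
      rwa [mul_zero] at h3
    have hexp_integral : (∫ t in Set.Ioi t₀, (n:ℝ) * Real.exp (K * t))
        = (n:ℝ) * Real.exp (K * t₀) / r := by
      have h := integral_Ioi_of_hasDerivAt_of_tendsto' hexpderiv
        (hexpint.mono_set (Set.Ioi_subset_Ioi ht₀)) htend
      rw [h, show (n:ℝ)/K = -((n:ℝ)/r) by rw [hKr, div_neg]]
      ring
    have hb2 : (∫ t in Set.Ioi t₀, φ t) ≤ 1 / r := by
      have hstep : (∫ t in Set.Ioi t₀, φ t) ≤ ∫ t in Set.Ioi t₀, (n:ℝ) * Real.exp (K * t) :=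
        setIntegral_mono_on hint2 (hexpint.mono_set (Set.Ioi_subset_Ioi ht₀))
          measurableSet_Ioi (fun t _ => min_le_right _ _)
      have hval2 : (n:ℝ) * Real.exp (K * t₀) / r = 1 / r := by
        rw [hKr, ht₀def]
        have hrne : r ≠ 0 := hr.ne'
        have harg : -r * (Real.log n / r) = -Real.log n := by field_simp
        rw [harg, Real.exp_neg, Real.exp_log (by exact_mod_cast hn : (0:ℝ) < n),
          mul_inv_cancel₀ (by exact_mod_cast hn.ne' : (n:ℝ) ≠ 0)]
      calc (∫ t in Set.Ioi t₀, φ t) ≤ ∫ t in Set.Ioi t₀, (n:ℝ) * Real.exp (K * t) := hstep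
        _ = (n:ℝ) * Real.exp (K * t₀) / r := hexp_integral
        _ = 1 / r := hval2
    calc (∫ t in Set.Ioi 0, (μ {a | t < τ a}).toReal) ≤ ∫ t in Set.Ioi 0, φ t := hmono2
      _ = (∫ t in Set.Ioc 0 t₀, φ t) + ∫ t in Set.Ioi t₀, φ t := hsplit
      _ ≤ t₀ + 1 / r := add_le_add hb1 hb2
      _ = (1 + Real.log n) / r := by rw [ht₀def, ← add_div, add_comm]
  · rw [integral_undef hτint]
    exact div_nonneg (by linarith) hr.le
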